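/- Let a be an integer and q a positive integer with gcd(a,q)=1. There exists a real number α = α(a,q), not depending on k, such that for every integer k, conj(G(a,k,q)) = √q · e^{iα} · c_{a/q}(k). -/

import Mathlib

noncomputable def e (x : ℝ) : ℂ := Complex.exp (2 * Real.pi * Complex.I * x)

noncomputable def G (a k : ℤ) (q : ℕ) : ℂ :=
  ∑ ℓ ∈ Finset.range q, e (((a * ℓ ^ 2 + k * ℓ : ℤ) : ℝ) / q)

noncomputable def invMod (a : ℤ) (q : ℕ) : ℕ := ZMod.val ((a : ZMod q)⁻¹)

noncomputable def cc (a : ℤ) (q : ℕ) (k : ℤ) : ℂ :=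
  if Odd q then e ((invMod (4 * a) q : ℝ) * (k : ℝ) ^ 2 / q)
  else if Even (k + (q : ℤ) / 2) then
    (Real.sqrt 2 : ℂ) * e ((invMod a q : ℝ) * (k : ℝ) ^ 2 / (4 * q))
  else 0

lemma e_add (x y : ℝ) : e (x + y) = e x * e y := by
  simp [e, ← Complex.exp_add]; ring_nf

lemma e_int (n : ℤ) : e n = 1 := by
  simp [e]
  rw [show 2 * (Real.pi : ℂ) * Complex.I * n = n * (2 * Real.pi * Complex.I) by ring]
  exact Complex.exp_int_mul_two_pi_mul_I n

lemma e_add_int (x : ℝ) (n : ℤ) : e (x + n) = e x := by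
  rw [e_add, e_int, mul_one]

lemma abs_e (x : ℝ) : ‖e x‖ = 1 := by
  simp [e, Complex.norm_exp]

lemma e_zero : e 0 = 1 := by simp [e]

lemma e_ne_zero (x : ℝ) : e x ≠ 0 := Complex.exp_ne_zero _

lemma conj_e (x : ℝ) : (starRingEnd ℂ) (e x) = e (-x) := by
  have h1 : e (-x) * e x = 1 := by rw [← e_add, neg_add_cancel, e_zero]
  have h2 : (starRingEnd ℂ) (e x) * e x = 1 := by
    rw [mul_comm, Complex.mul_conj, Complex.normSq_eq_norm_sq, abs_e]; norm_num
  exact mul_right_cancel₀ (e_ne_zero x) (h2.trans h1.symm)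

lemma e_half : e (1/2) = -1 := by
  have : ((2:ℂ) * Real.pi * Complex.I * (1/2:ℝ)) = Real.pi * Complex.I := by
    push_cast; ring
  rw [e, this, Complex.exp_pi_mul_I]

noncomputable def F (q : ℕ) (x : ZMod q) : ℂ := e ((x.val : ℝ) / q)

section Fsec
variable (q : ℕ) [NeZero q]

lemma F_int (n : ℤ) : F q ((n : ZMod q)) = e ((n : ℝ) / q) := by
  have hq : (q : ℝ) ≠ 0 := Nat.cast_ne_zero.mpr (NeZero.ne q)
  have hdvd : (q : ℤ) ∣ n - ((n : ZMod q)).val := by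
    rw [← ZMod.intCast_zmod_eq_zero_iff_dvd]
    push_cast
    simp [ZMod.natCast_val, ZMod.cast_id]
  obtain ⟨m, hm⟩ := hdvd
  have : (n : ℝ) / q = (((n : ZMod q)).val : ℝ) / q + m := by
    have : (n : ℝ) = ((n : ZMod q)).val + q * m := by
      have := hm
      have : (n:ℤ) = ((n : ZMod q)).val + q * m := by linarith
      exact_mod_cast congrArg (Int.cast : ℤ → ℝ) this
    rw [this]; field_simp
  rw [F, this, e_add_int]

omit [NeZero q] in
lemma F_zero : F q 0 = 1 := by simp [F, e_zero]

lemma F_add (x y : ZMod q) : F q (x + y) = F q x * F q y := by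
  have hx : ((x.val : ℤ) : ZMod q) = x := by push_cast; simp [ZMod.natCast_val, ZMod.cast_id]
  have hy : ((y.val : ℤ) : ZMod q) = y := by push_cast; simp [ZMod.natCast_val, ZMod.cast_id]
  have h1 : F q x = e ((x.val : ℝ) / q) := rfl
  have h2 : F q y = e ((y.val : ℝ) / q) := rfl
  have h3 : F q (x + y) = e (((x.val + y.val : ℤ) : ℝ) / q) := by
    rw [← F_int]; congr 1; push_cast [hx, hy]; ring
  rw [h1, h2, h3, ← e_add]
  congr 1; push_cast; ring

lemma conj_F (x : ZMod q) : (starRingEnd ℂ) (F q x) = F q (-x) := by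
  have hx : ((x.val : ℤ) : ZMod q) = x := by push_cast; simp [ZMod.natCast_val, ZMod.cast_id]
  have h3 := F_int q (-(x.val : ℤ))
  rw [show ((-(x.val : ℤ) : ℤ) : ZMod q) = -x by push_cast [hx]; ring] at h3
  rw [h3, F, conj_e]
  congr 1; push_cast; ring

end Fsec

open Finset in
noncomputable def GZ (q : ℕ) [NeZero q] (a k : ZMod q) : ℂ :=
  ∑ x : ZMod q, F q (a * x ^ 2 + k * x)

section GZsec
open Finset
variable (q : ℕ) [NeZero q]

lemma G_eq (a k : ℤ) : G a k q = GZ q (a : ZMod q) (k : ZMod q) := by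
  rw [G, GZ]
  apply Finset.sum_nbij' (i := fun (ℓ : ℕ) => ((ℓ : ZMod q)))
      (j := fun (x : ZMod q) => x.val)
  · intro ℓ hℓ; exact mem_univ _
  · intro x hx; exact mem_range.mpr (ZMod.val_lt x)
  · intro ℓ hℓ; exact ZMod.val_cast_of_lt (mem_range.mp hℓ)
  · intro x hx; simp [ZMod.natCast_val, ZMod.cast_id]
  · intro ℓ hℓ
    rw [← F_int]
    congr 1
    push_cast [ZMod.natCast_val, ZMod.cast_id]
    ring

lemma GZ_translate (a k t : ZMod q) :
    GZ q a k = F q (a * t ^ 2 + k * t) * GZ q a (k + 2 * a * t) := by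
  simp only [GZ]
  rw [Finset.mul_sum]
  rw [← Equiv.sum_comp (Equiv.addRight t) (fun x => F q (a * x ^ 2 + k * x))]
  apply Finset.sum_congr rfl
  intro x _
  rw [← F_add]
  congr 1
  simp only [Equiv.coe_addRight]
  ring

lemma char_sum (c : ZMod q) : ∑ y : ZMod q, F q (c * y) = if c = 0 then (q : ℂ) else 0 := by
  split_ifs with h
  · simp [h, F_zero]
  · have hFc : F q c ≠ 1 := by
      intro hc
      apply h
      have hv : ((c.val : ℝ) / q) < 1 := by
        rw [div_lt_one (by exact_mod_cast Nat.pos_of_ne_zero (NeZero.ne q))]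
        exact_mod_cast ZMod.val_lt c
      have hv0 : (0:ℝ) ≤ (c.val : ℝ) / q := by positivity
      rw [F] at hc
      rw [e, Complex.exp_eq_one_iff] at hc
      obtain ⟨n, hn⟩ := hc
      have hpi : (2 * Real.pi * Complex.I) ≠ 0 := by
        simp [Real.pi_ne_zero, Complex.I_ne_zero]
      have : (((c.val : ℝ) / q : ℝ) : ℂ) = n := mul_left_cancel₀ hpi (by rw [hn]; ring)
      have hr : ((c.val : ℝ) / q) = (n : ℝ) := by exact_mod_cast this
      have hn0 : n = 0 := by
        rw [hr] at hv hv0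
        exact_mod_cast le_antisymm (by exact_mod_cast (Int.lt_add_one_iff.mp (by exact_mod_cast hv))) (by exact_mod_cast hv0)
      have hvz : c.val = 0 := by
        have hq' : (q:ℝ) ≠ 0 := Nat.cast_ne_zero.mpr (NeZero.ne q)
        rw [hn0, Int.cast_zero, div_eq_zero_iff] at hr
        rcases hr with h0 | h0
        · exact_mod_cast h0
        · exact absurd h0 hq'
      exact (ZMod.val_eq_zero c).mp hvz
    have hshift : F q c * (∑ y : ZMod q, F q (c * y)) = ∑ y : ZMod q, F q (c * y) := by
      rw [Finset.mul_sum]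
      rw [← Equiv.sum_comp (Equiv.addRight 1) (fun y => F q (c * y))]
      apply Finset.sum_congr rfl
      intro y _
      rw [← F_add]
      congr 1
      simp only [Equiv.coe_addRight]
      ring
    by_contra hS
    exact hFc (mul_right_cancel₀ hS (by rw [hshift, one_mul]))

lemma GZ_mul_conj (a k : ZMod q) :
    GZ q a k * (starRingEnd ℂ) (GZ q a k)
      = ∑ d : ZMod q, F q (a * d ^ 2 + k * d) * (if 2 * a * d = 0 then (q:ℂ) else 0) := by
  have hconj : (starRingEnd ℂ) (GZ q a k) = ∑ y : ZMod q, F q (-(a * y ^ 2 + k * y)) := by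
    rw [GZ, map_sum]; exact Finset.sum_congr rfl fun y _ => conj_F q _
  rw [hconj, GZ, Finset.sum_mul_sum]
  rw [Finset.sum_comm]
  have step : ∀ y : ZMod q, ∑ x : ZMod q, F q (a*x^2+k*x) * F q (-(a*y^2+k*y))
      = ∑ d : ZMod q, F q (a*d^2+k*d) * F q ((2*a*d)*y) := by
    intro y
    rw [← Equiv.sum_comp (Equiv.addLeft y) (fun x => F q (a*x^2+k*x) * F q (-(a*y^2+k*y)))]
    apply Finset.sum_congr rfl
    intro d _
    simp only [Equiv.coe_addLeft]
    rw [← F_add, ← F_add]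
    congr 1
    ring
  rw [Finset.sum_congr rfl fun y _ => step y]
  rw [Finset.sum_comm]
  apply Finset.sum_congr rfl
  intro d _
  rw [← Finset.mul_sum, char_sum]

end GZsec

section Main
open Finset

lemma isUnit_cast (a : ℤ) (q : ℕ) [NeZero q] (hcop : Int.gcd a q = 1) :
    IsUnit ((a : ZMod q)) := by
  have h : IsCoprime a (q : ℤ) := Int.isCoprime_iff_gcd_eq_one.mpr hcop
  have h2 := h.map (Int.castRingHom (ZMod q))
  simp only [map_intCast, map_natCast] at h2
  have hq0 : ((q : ℤ) : ZMod q) = 0 := by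
    push_cast
    exact ZMod.natCast_self q
  rw [ZMod.natCast_self] at h2
  exact isCoprime_zero_right.mp h2

lemma val_inv_spec (a : ℤ) (q : ℕ) [NeZero q] (h : IsUnit ((a : ZMod q))) :
    ∃ c : ℤ, a * (invMod a q : ℤ) = 1 + c * q := by
  have hcast : ((invMod a q : ℕ) : ZMod q) = ((a : ZMod q))⁻¹ := by
    exact ZMod.natCast_rightInverse _
  have h1 : (((a * (invMod a q : ℤ) - 1 : ℤ)) : ZMod q) = 0 := by
    push_cast [hcast]
    rw [ZMod.mul_inv_of_unit _ h]
    ring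
  obtain ⟨c, hc⟩ := (ZMod.intCast_zmod_eq_zero_iff_dvd _ q).mp h1
  exact ⟨c, by linarith [hc]⟩

lemma two_torsion (q r0 : ℕ) [NeZero q] (hq2 : q = 2 * r0) (hr0 : 0 < r0) (d : ZMod q) :
    2 * d = 0 ↔ d = 0 ∨ d = (r0 : ZMod q) := by
  constructor
  · intro h
    have hd : ((d.val : ℕ) : ZMod q) = d := ZMod.natCast_rightInverse _
    have h2 : (((2 * d.val : ℕ)) : ZMod q) = 0 := by push_cast [hd]; exact h
    have hdvd : q ∣ 2 * d.val := (ZMod.natCast_eq_zero_iff _ _).mp h2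
    obtain ⟨c, hc⟩ := hdvd
    have hlt : d.val < q := ZMod.val_lt d
    have hval : d.val = r0 * c := by
      have hc' : 2 * d.val = 2 * (r0 * c) := by rw [← mul_assoc, ← hq2]; exact hc
      omega
    have hc2 : c < 2 := by nlinarith
    interval_cases c
    · left; rw [← hd, hval]; simp
    · right; rw [← hd, hval]; simp
  · rintro (rfl | rfl)
    · simp
    · rw [show (2 : ZMod q) * (r0 : ZMod q) = ((2 * r0 : ℕ) : ZMod q) by push_cast; ring,
        ← hq2, ZMod.natCast_self]

lemma GZ_mul_conj_even (q r0 : ℕ) [NeZero q] (hq2 : q = 2 * r0) (hr0 : 0 < r0)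
    (a k : ZMod q) (haU : IsUnit a) :
    GZ q a k * (starRingEnd ℂ) (GZ q a k)
      = (q : ℂ) * (1 + F q (a * (r0 : ZMod q) ^ 2 + k * (r0 : ZMod q))) := by
  have hr' : ((r0 : ZMod q)) ≠ 0 := by
    intro h0
    have := (ZMod.natCast_eq_zero_iff _ _).mp h0
    have := Nat.le_of_dvd hr0 this
    omega
  rw [GZ_mul_conj]
  have hcond : ∀ d : ZMod q, (2 * a * d = 0) ↔ (d = 0 ∨ d = (r0 : ZMod q)) := by
    intro d
    rw [show 2 * a * d = a * (2 * d) by ring, haU.mul_right_eq_zero]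
    exact two_torsion q r0 hq2 hr0 d
  have hstep : ∀ d : ZMod q,
      F q (a * d ^ 2 + k * d) * (if 2 * a * d = 0 then (q:ℂ) else 0)
      = if d ∈ ({0, (r0 : ZMod q)} : Finset (ZMod q)) then F q (a * d ^ 2 + k * d) * q else 0 := by
    intro d
    have hmem : d ∈ ({0, (r0 : ZMod q)} : Finset (ZMod q)) ↔ (d = 0 ∨ d = (r0 : ZMod q)) := by
      simp
    by_cases hd : d = 0 ∨ d = (r0 : ZMod q)
    · rw [if_pos ((hcond d).mpr hd), if_pos (hmem.mpr hd)]
    · rw [if_neg (fun h => hd ((hcond d).mp h)), if_neg (fun h => hd (hmem.mp h)), mul_zero]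
  rw [Finset.sum_congr rfl fun d _ => hstep d, Finset.sum_ite_mem, Finset.univ_inter,
    Finset.sum_pair (fun h => hr' h.symm)]
  rw [show a * 0 ^ 2 + k * 0 = 0 by ring, F_zero]
  ring

lemma F_val_at_half (q r0 : ℕ) [NeZero q] (hq2 : q = 2 * r0) (hr0 : 0 < r0) (a k : ℤ) :
    F q ((a : ZMod q) * ((r0 : ZMod q)) ^ 2 + (k : ZMod q) * (r0 : ZMod q))
      = if Even (a * r0 + k) then 1 else -1 := by
  have hF : F q ((a : ZMod q) * ((r0 : ZMod q)) ^ 2 + (k : ZMod q) * (r0 : ZMod q))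
      = e (((a * r0 ^ 2 + k * r0 : ℤ) : ℝ) / q) := by
    rw [← F_int]; congr 1; push_cast; ring
  have hr0R : ((r0 : ℝ)) ≠ 0 := Nat.cast_ne_zero.mpr hr0.ne'
  have hx : ((a * r0 ^ 2 + k * r0 : ℤ) : ℝ) / q = ((a * r0 + k : ℤ) : ℝ) / 2 := by
    have hqR : (q : ℝ) = 2 * r0 := by rw [hq2]; push_cast; ring
    rw [hqR]
    field_simp
    push_cast
    ring
  rw [hF, hx]
  split_ifs with hpar
  · obtain ⟨s, hs⟩ := hpar
    rw [show ((a * r0 + k : ℤ) : ℝ) / 2 = ((s : ℤ) : ℝ) by rw [hs]; push_cast; ring]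
    exact e_int s
  · obtain ⟨s, hs⟩ := Int.not_even_iff_odd.mp hpar
    rw [show ((a * r0 + k : ℤ) : ℝ) / 2 = 1/2 + ((s : ℤ) : ℝ) by rw [hs]; push_cast; ring]
    rw [e_add_int, e_half]


theorem stmt2 (a : ℤ) (q : ℕ) (hq : 0 < q) (hcop : Int.gcd a q = 1) :
    ∃ α : ℝ, ∀ k : ℤ,
      (starRingEnd ℂ) (G a k q) =
        (Real.sqrt q : ℂ) * Complex.exp (Complex.I * α) * cc a q k := by
  haveI : NeZero q := ⟨hq.ne'⟩
  have haU : IsUnit ((a : ZMod q)) := isUnit_cast a q hcop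
  by_cases hodd : Odd q
  · -- q odd
    have h2U : IsUnit (2 : ZMod q) := by
      rw [show (2 : ZMod q) = ((2 : ℕ) : ZMod q) by push_cast; rfl]
      rw [ZMod.isUnit_iff_coprime]
      exact (Nat.Prime.coprime_iff_not_dvd Nat.prime_two).mpr
        (fun hdvd => (Nat.not_even_iff_odd.mpr hodd) (even_iff_two_dvd.mpr hdvd))
    have h2aU : IsUnit (2 * (a : ZMod q)) := h2U.mul haU
    have h4aU : IsUnit (((4 * a : ℤ) : ZMod q)) := by
      rw [show (((4 * a : ℤ)) : ZMod q) = 2 * 2 * (a : ZMod q) by push_cast; ring]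
      exact (h2U.mul h2U).mul haU
    -- modulus at k = 0
    have hmod : GZ q (a : ZMod q) 0 * (starRingEnd ℂ) (GZ q (a : ZMod q) 0) = (q : ℂ) := by
      rw [GZ_mul_conj]
      have hc : ∀ d : ZMod q,
          F q ((a:ZMod q) * d ^ 2 + 0 * d) * (if 2 * (a:ZMod q) * d = 0 then (q:ℂ) else 0)
          = if d = 0 then (q:ℂ) else 0 := by
        intro d
        by_cases hd : d = 0
        · simp [hd, F_zero]
        · have hne : 2 * (a:ZMod q) * d ≠ 0 := by
            intro h0
            exact hd (h2aU.mul_left_cancel (by rw [mul_zero]; exact h0))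
          simp [hd, hne]
      rw [Finset.sum_congr rfl fun d _ => hc d]
      simp
    set z := (starRingEnd ℂ) (G a 0 q) with hz
    have habs : ‖z‖ = Real.sqrt q := by
      have h1 : G a 0 q * (starRingEnd ℂ) (G a 0 q) = (q : ℂ) := by
        rw [G_eq]
        rw [show ((0:ℤ) : ZMod q) = 0 by push_cast; rfl]
        exact hmod
      rw [Complex.mul_conj] at h1
      have : Complex.normSq (G a 0 q) = q := by exact_mod_cast h1
      rw [hz, Complex.norm_conj, Complex.norm_def, this]
    refine ⟨Complex.arg z, fun k => ?_⟩
    -- phase relation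
    have key : (starRingEnd ℂ) (G a k q)
        = F q ((((4 * a : ℤ) : ZMod q))⁻¹ * ((k : ZMod q)) ^ 2) * z := by
      set a' : ZMod q := (a : ZMod q) with ha'
      set t : ZMod q := (2 * a')⁻¹ * (k : ZMod q) with ht
      have h2a1 : 2 * a' * (2 * a')⁻¹ = 1 := ZMod.mul_inv_of_unit _ h2aU
      have htrans := GZ_translate q a' 0 t
      have hk' : (0 : ZMod q) + 2 * a' * t = (k : ZMod q) := by
        rw [ht, zero_add, ← mul_assoc, h2a1, one_mul]
      rw [hk'] at htrans
      have hu : a' * t ^ 2 = (((4 * a : ℤ) : ZMod q))⁻¹ * ((k : ZMod q)) ^ 2 := by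
        apply h4aU.mul_left_cancel
        have e1 : ((4 * a : ℤ) : ZMod q) = 2 * 2 * a' := by push_cast; ring
        rw [show ((4*a:ℤ):ZMod q) * ((((4*a:ℤ):ZMod q))⁻¹ * (k:ZMod q)^2)
            = (((4*a:ℤ):ZMod q) * (((4*a:ℤ):ZMod q))⁻¹) * (k:ZMod q)^2 from by ring,
          ZMod.mul_inv_of_unit _ h4aU, one_mul, e1]
        calc 2 * 2 * a' * (a' * t ^ 2) = (2 * a' * (2*a')⁻¹) ^ 2 * (k : ZMod q) ^ 2 := by
              rw [ht]; ring
          _ = (k : ZMod q) ^ 2 := by rw [h2a1]; ring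
      set u := (((4 * a : ℤ) : ZMod q))⁻¹ * ((k : ZMod q)) ^ 2 with hudef
      rw [show a' * t ^ 2 + 0 * t = a' * t ^ 2 by ring, hu] at htrans
      -- htrans : GZ q a' 0 = F q u * GZ q a' k
      have hG : GZ q a' (k : ZMod q) = F q (-u) * GZ q a' 0 := by
        rw [htrans, ← mul_assoc, ← F_add, neg_add_cancel, F_zero, one_mul]
      rw [G_eq, hG, map_mul, conj_F, neg_neg]
      congr 1
      rw [hz, G_eq]
      rw [show ((0:ℤ) : ZMod q) = 0 by push_cast; rfl]
    -- cc match
    have hcc : cc a q k = F q ((((4 * a : ℤ) : ZMod q))⁻¹ * ((k : ZMod q)) ^ 2) := by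
      rw [cc, if_pos hodd]
      have hcast : ((invMod (4*a) q : ℕ) : ZMod q) = (((4 * a : ℤ) : ZMod q))⁻¹ :=
        ZMod.natCast_rightInverse _
      have : ((((invMod (4*a) q : ℤ) * k ^ 2 : ℤ)) : ZMod q)
          = (((4 * a : ℤ) : ZMod q))⁻¹ * ((k : ZMod q)) ^ 2 := by
        push_cast [hcast]
        ring
      rw [← this, F_int]
      congr 1
      push_cast
      ring
    have hzz : z = ((Real.sqrt q : ℝ) : ℂ) * Complex.exp (Complex.I * (Complex.arg z : ℝ)) := by
      conv_lhs => rw [← Complex.norm_mul_exp_arg_mul_I z]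
      rw [habs, mul_comm Complex.I]
    rw [key, hcc]
    conv_lhs => rw [hzz]
    ring
  · -- q even
    have heven : Even q := Nat.not_odd_iff_even.mp hodd
    obtain ⟨r0', hr0'⟩ := heven
    have hq2 : q = 2 * r0' := by omega
    have hr0pos : 0 < r0' := by omega
    set r0 : ℕ := r0' with hr0def
    have hqZ : (q : ℤ) = 2 * (r0 : ℤ) := by rw [hq2]; push_cast; ring
    have hdiv2 : ((q : ℤ)) / 2 = (r0 : ℤ) := by omega
    have ha_odd : Odd a := by
      rcases Int.even_or_odd a with he | ho
      · exfalso
        have h2a : (2:ℤ) ∣ a := even_iff_two_dvd.mp he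
        have h2q : (2:ℤ) ∣ (q:ℤ) := ⟨(r0:ℤ), hqZ⟩
        have hd := Int.dvd_gcd h2a h2q
        rw [hcop] at hd
        norm_num at hd
      · exact ho
    obtain ⟨c, hc⟩ := val_inv_spec a q haU
    set b : ℕ := invMod a q with hbdef
    have hbase : G a (r0 : ℤ) q * (starRingEnd ℂ) (G a (r0:ℤ) q) = ((2 * q : ℕ) : ℂ) := by
      rw [G_eq, GZ_mul_conj_even q r0 hq2 hr0pos _ _ haU, F_val_at_half q r0 hq2 hr0pos]
      rw [if_pos (by obtain ⟨u, hu⟩ := ha_odd; exact ⟨(u+1)*(r0:ℤ), by rw [hu]; ring⟩)]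
      push_cast; ring
    set z : ℂ := e (-(((b:ℝ) * (r0:ℝ)^2) / (4 * (q:ℝ)))) * (starRingEnd ℂ) (G a (r0:ℤ) q) with hzdef
    have habs : ‖z‖ = Real.sqrt (2 * (q:ℝ)) := by
      rw [hzdef, norm_mul, abs_e, one_mul, Complex.norm_conj, Complex.norm_def]
      have h1 := hbase
      rw [Complex.mul_conj] at h1
      have h2 : Complex.normSq (G a (r0:ℤ) q) = ((2*q : ℕ) : ℝ) := by exact_mod_cast h1
      rw [h2]
      norm_num
    refine ⟨Complex.arg z, fun k => ?_⟩
    rw [cc, if_neg hodd]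
    by_cases hke : Even (k + (q:ℤ)/2)
    · rw [if_pos hke]
      -- Bezout: find t, m with k = r0 + 2at - 2 r0 m
      have hgr : Int.gcd a (r0:ℤ) = 1 := by
        have hdvd : Int.gcd a (r0:ℤ) ∣ Int.gcd a (q:ℤ) :=
          Int.gcd_dvd_gcd_of_dvd_right a ⟨2, by rw [hqZ]; ring⟩
        rw [hcop] at hdvd
        exact Nat.dvd_one.mp hdvd
      obtain ⟨w, hw⟩ : Even (k - (r0:ℤ)) := by
        have h' : Even (k + (r0:ℤ)) := by rwa [hdiv2] at hke
        obtain ⟨w, hw⟩ := h'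
        exact ⟨w - r0, by omega⟩
      have hbez : (1:ℤ) = a * Int.gcdA a (r0:ℤ) + (r0:ℤ) * Int.gcdB a (r0:ℤ) := by
        have h' := Int.gcd_eq_gcd_ab a (r0:ℤ)
        rw [hgr] at h'
        exact_mod_cast h'
      set t : ℤ := Int.gcdA a (r0:ℤ) * w with htdef
      set m : ℤ := -(Int.gcdB a (r0:ℤ) * w) with hmdef
      have hk_eq : k = (r0:ℤ) + 2*a*t - 2*(r0:ℤ)*m := by
        have h' : k - r0 = 2*w := by omega
        rw [htdef, hmdef]
        linear_combination h' + 2*w*hbez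
      obtain ⟨s, hs⟩ : ∃ s, m * (m - 1) = 2 * s := by
        rcases Int.even_or_odd m with ⟨u,hu⟩ | ⟨u,hu⟩
        · exact ⟨u*(m-1), by rw [hu]; ring⟩
        · exact ⟨m*u, by rw [hu]; ring⟩
      have hc2 : a * (b:ℤ) = 1 + 2*c*(r0:ℤ) := by linear_combination hc + c*hqZ
      set N : ℤ := -a*c*t^2 - c*(r0:ℤ)*t - (b:ℤ)*(r0:ℤ)*s + a*(b:ℤ)*t*m with hNdef
      have hN : 4*a*t^2 + 4*(r0:ℤ)*t + (b:ℤ)*(r0:ℤ)^2 - (b:ℤ)*k^2 = 4*(q:ℤ)*N := by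
        rw [hNdef]
        linear_combination (-(4*a*t^2+4*(r0:ℤ)*t)) * hc2 + (-(4*(b:ℤ)*(r0:ℤ)^2)) * hs
          + (-((b:ℤ)*(k + (r0:ℤ) + 2*a*t - 2*(r0:ℤ)*m))) * hk_eq + (-(4*N)) * hqZ
      -- translation
      set a' : ZMod q := (a : ZMod q) with ha'def
      have htrans := GZ_translate q a' (((r0:ℤ)) : ZMod q) ((t : ℤ) : ZMod q)
      have hkk : (((r0:ℤ)) : ZMod q) + 2 * a' * ((t:ℤ) : ZMod q) = ((k : ℤ) : ZMod q) := by
        have hz0 : ((k - ((r0:ℤ) + 2*a*t) : ℤ) : ZMod q) = 0 := by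
          rw [ZMod.intCast_zmod_eq_zero_iff_dvd]
          exact ⟨-m, by linear_combination hk_eq + m*hqZ⟩
        push_cast at hz0
        rw [ha'def]
        push_cast
        linear_combination -hz0
      rw [hkk] at htrans
      have hG : GZ q a' ((k:ℤ) : ZMod q)
          = F q (-(a' * ((t:ℤ):ZMod q)^2 + (((r0:ℤ)):ZMod q) * ((t:ℤ):ZMod q)))
            * GZ q a' (((r0:ℤ)):ZMod q) := by
        rw [htrans, ← mul_assoc, ← F_add, neg_add_cancel, F_zero, one_mul]
      have hFu : F q (a' * ((t:ℤ):ZMod q)^2 + (((r0:ℤ)):ZMod q) * ((t:ℤ):ZMod q))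
          = e (((a*t^2 + (r0:ℤ)*t : ℤ) : ℝ)/q) := by
        rw [← F_int]; congr 1; rw [ha'def]; push_cast; ring
      have hqR : (q:ℝ) ≠ 0 := Nat.cast_ne_zero.mpr hq.ne'
      have hreal : ((a*t^2 + (r0:ℤ)*t : ℤ) : ℝ)/q
          = ((b:ℝ) * (k:ℝ)^2 / (4*(q:ℝ)) + (-(((b:ℝ) * (r0:ℝ)^2) / (4 * (q:ℝ))))) + ((N:ℤ):ℝ) := by
        have hNr : 4*(a:ℝ)*(t:ℝ)^2 + 4*(r0:ℝ)*(t:ℝ) + (b:ℝ)*(r0:ℝ)^2 - (b:ℝ)*(k:ℝ)^2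
            = 4*(q:ℝ)*((N:ℤ):ℝ) := by exact_mod_cast hN
        push_cast
        field_simp
        linear_combination hNr
      have hFu2 : F q (a' * ((t:ℤ):ZMod q)^2 + (((r0:ℤ)):ZMod q) * ((t:ℤ):ZMod q))
          = e ((b:ℝ) * (k:ℝ)^2 / (4*(q:ℝ))) * e (-(((b:ℝ) * (r0:ℝ)^2) / (4 * (q:ℝ)))) := by
        rw [hFu, hreal, e_add_int, e_add]
      have hzz : z = ((Real.sqrt 2 * Real.sqrt q : ℝ) : ℂ) * Complex.exp (Complex.I * (Complex.arg z : ℝ)) := by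
        conv_lhs => rw [← Complex.norm_mul_exp_arg_mul_I z]
        rw [habs, ← Real.sqrt_mul (by norm_num : (0:ℝ) ≤ 2) (q:ℝ), mul_comm Complex.I]
      have hconjG : (starRingEnd ℂ) (G a k q)
          = e ((b:ℝ) * (k:ℝ)^2 / (4*(q:ℝ))) * z := by
        rw [G_eq q a k, hG, map_mul, conj_F, neg_neg, hFu2, hzdef, ← G_eq q a (r0:ℤ)]
        ring
      rw [hconjG]
      conv_lhs => rw [hzz]
      push_cast
      ring
    · rw [if_neg hke]
      have hnotE : ¬ Even (a * (r0:ℤ) + k) := by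
        intro hE
        apply hke
        rw [hdiv2]
        obtain ⟨u, hu⟩ := ha_odd
        have hlin : a*(r0:ℤ) + k = 2*(u*(r0:ℤ)) + ((r0:ℤ) + k) := by rw [hu]; ring
        obtain ⟨w0, hw0⟩ := hE
        exact ⟨w0 - u*(r0:ℤ), by omega⟩
      have hG0 : G a k q = 0 := by
        have h1 : G a k q * (starRingEnd ℂ) (G a k q)
            = (q : ℂ) * (1 + F q ((a : ZMod q) * ((r0 : ZMod q)) ^ 2 + (k : ZMod q) * (r0 : ZMod q))) := by
          rw [G_eq]
          exact GZ_mul_conj_even q r0 hq2 hr0pos _ _ haU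
        rw [F_val_at_half q r0 hq2 hr0pos, if_neg hnotE] at h1
        rw [Complex.mul_conj] at h1
        have h2 : Complex.normSq (G a k q) = 0 := by
          have : ((Complex.normSq (G a k q) : ℝ) : ℂ) = 0 := by rw [h1]; ring
          exact_mod_cast this
        exact Complex.normSq_eq_zero.mp h2
      rw [hG0, map_zero, mul_zero]

end Main
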